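/- Let H ∈ M_d(ℂ) be Hermitian and define the linear map E : M_d(ℂ) → M_d(ℂ) by E(ρ) = −i(Hρ − ρH). Then E is completely positive if and only if H is a scalar multiple of the identity matrix (in which case E = 0). -/

import Mathlib

open scoped Kronecker ComplexOrder Matrix

noncomputable section

/-- The Choi matrix of a linear map between matrix algebras. -/
def choi {ι κ : Type*} [Fintype ι] [DecidableEq ι] [Fintype κ]
    (E : Matrix ι ι ℂ →ₗ[ℂ] Matrix κ κ ℂ) : Matrix (ι × κ) (ι × κ) ℂ :=
  ∑ i : ι, ∑ j : ι, Matrix.single i j (1 : ℂ) ⊗ₖ E (Matrix.single i j 1)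

/-- A quantum channel: completely positive (positive semidefinite Choi matrix) and
trace preserving. -/
def IsCPTP {ι κ : Type*} [Fintype ι] [DecidableEq ι] [Fintype κ]
    (E : Matrix ι ι ℂ →ₗ[ℂ] Matrix κ κ ℂ) : Prop :=
  (choi E).PosSemidef ∧ ∀ X, (E X).trace = X.trace

/-- A density matrix: positive semidefinite with unit trace. -/
def IsDensityMatrix {ι : Type*} [Fintype ι] (ρ : Matrix ι ι ℂ) : Prop :=
  ρ.PosSemidef ∧ ρ.trace = 1

/-- The exponential `e^L` of a superoperator `L`, taken in the algebra of linear
endomorphisms of the matrix space (computed via the matrix exponential in the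
standard basis of the matrix space). -/
def expL {ι : Type*} [Fintype ι] [DecidableEq ι]
    (L : Matrix ι ι ℂ →ₗ[ℂ] Matrix ι ι ℂ) : Matrix ι ι ℂ →ₗ[ℂ] Matrix ι ι ℂ :=
  Matrix.toLin (Matrix.stdBasis ℂ ι ι) (Matrix.stdBasis ℂ ι ι)
    (NormedSpace.exp (LinearMap.toMatrix (Matrix.stdBasis ℂ ι ι) (Matrix.stdBasis ℂ ι ι) L))

/-- A Lindbladian: `L(ρ) = -i[H,ρ] + Σ_j γ_j (A_j ρ A_j† - ½{A_j†A_j, ρ})` with `H`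
Hermitian and rates `γ_j ≥ 0`. -/
def IsLindbladian {ι : Type*} [Fintype ι] [DecidableEq ι]
    (L : Matrix ι ι ℂ →ₗ[ℂ] Matrix ι ι ℂ) : Prop :=
  ∃ (J : ℕ) (H : Matrix ι ι ℂ) (γ : Fin J → ℝ) (A : Fin J → Matrix ι ι ℂ),
    H.IsHermitian ∧ (∀ j, 0 ≤ γ j) ∧
    ∀ ρ, L ρ = -(Complex.I) • (H * ρ - ρ * H) +
      ∑ j, (γ j : ℂ) •
        (A j * ρ * (A j)ᴴ - (2⁻¹ : ℂ) • ((A j)ᴴ * A j * ρ + ρ * ((A j)ᴴ * A j)))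

/-- `L` is quantum programmable: there are a finite-dimensional program register, a fixed
quantum channel `P`, and a continuous family of program (density) states `π t` such that
`P (X ⊗ π t) = e^{tL} X` for all `t ≥ 0`. -/
def QuantumProgrammable {ι : Type*} [Fintype ι] [DecidableEq ι]
    (L : Matrix ι ι ℂ →ₗ[ℂ] Matrix ι ι ℂ) : Prop :=
  ∃ dP : ℕ, 1 ≤ dP ∧
    ∃ (P : Matrix (ι × Fin dP) (ι × Fin dP) ℂ →ₗ[ℂ] Matrix ι ι ℂ)
      (π : ℝ → Matrix (Fin dP) (Fin dP) ℂ),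
      IsCPTP P ∧ ContinuousOn π (Set.Ici 0) ∧
      (∀ t : ℝ, 0 ≤ t → IsDensityMatrix (π t)) ∧
      ∀ t : ℝ, 0 ≤ t → ∀ X, P (X ⊗ₖ π t) = expL ((t : ℂ) • L) X

lemma psd_col_zero {n : Type*} [Fintype n] [DecidableEq n] {M : Matrix n n ℂ}
    (hM : M.PosSemidef) {a : n} (ha : M a a = 0) (b : n) : M b a = 0 := by
  have h : star (Pi.single a (1:ℂ)) ⬝ᵥ M *ᵥ Pi.single a (1:ℂ) = 0 := by
    simp [Matrix.mulVec_single, dotProduct, Pi.single_apply, apply_ite, ha]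
  have h2 := (hM.dotProduct_mulVec_zero_iff (Pi.single a 1)).mp h
  have := congrFun h2 b
  simpa [Matrix.mulVec_single] using this

lemma choi_apply {ι κ : Type*} [Fintype ι] [DecidableEq ι] [Fintype κ]
    (E : Matrix ι ι ℂ →ₗ[ℂ] Matrix κ κ ℂ) (i j : ι) (k l : κ) :
    choi E (i,k) (j,l) = E (Matrix.single i j 1) k l := by
  simp [choi, Matrix.sum_apply, Matrix.single, Matrix.kroneckerMap_apply,
    ite_and, Finset.sum_ite_eq, Finset.sum_ite_eq']


/-- for Hermitian `H`, the map `E(ρ) = −i(Hρ − ρH)` is completely positive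
iff `H` is a scalar multiple of the identity. -/
theorem commutator_map_cp_iff_scalar
    {d : ℕ} (H : Matrix (Fin d) (Fin d) ℂ) (hH : H.IsHermitian)
    (E : Matrix (Fin d) (Fin d) ℂ →ₗ[ℂ] Matrix (Fin d) (Fin d) ℂ)
    (hE : ∀ ρ, E ρ = -(Complex.I) • (H * ρ - ρ * H)) :
    (choi E).PosSemidef ↔ ∃ c : ℂ, H = c • (1 : Matrix (Fin d) (Fin d) ℂ) := by
  have key : ∀ i j k l : Fin d, choi E (i,k) (j,l)
      = -Complex.I * ((if j = l then H k i else 0) - (if i = k then H j l else 0)) := by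
    intro i j k l
    rw [choi_apply, hE]
    simp [Matrix.mul_apply, Matrix.single, ite_and, Finset.sum_ite_eq,
      Finset.sum_ite_eq', mul_comm]
  constructor
  · intro hC
    -- all diagonal entries of choi E are zero
    have hdiag : ∀ p : Fin d × Fin d, choi E p p = 0 := by
      rintro ⟨i, k⟩
      rw [key]
      by_cases h : i = k <;> simp [h]
    have hzero : ∀ p q : Fin d × Fin d, choi E p q = 0 := fun p q =>
      psd_col_zero hC (hdiag q) p
    rcases Nat.eq_zero_or_pos d with hd | hd
    · subst hd; exact ⟨0, by ext i j; exact i.elim0⟩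
    · refine ⟨H ⟨0, hd⟩ ⟨0, hd⟩, ?_⟩
      ext i j
      by_cases hij : i = j
      · subst hij
        -- use entry ((i,i),(0,0)) : -I*(H i i - H 0 0) when... need (i,i),(j,j): C((i,i),(j,j)) = -I (H i i - H j j)?  recompute: key i j i j with k=i,l=j: -I*((if j=j then H i i) - (if i=i then H j j)) = -I (H i i - H j j)
        have := hzero (i, i) (⟨0,hd⟩, ⟨0,hd⟩)
        rw [key] at this
        simp only [if_pos rfl] at this
        have h2 : H i i - H ⟨0,hd⟩ ⟨0,hd⟩ = 0 := by
          rcases mul_eq_zero.mp this with h | h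
          · exact absurd h (by simp [Complex.I_ne_zero])
          · simpa using h
        simp [Matrix.one_apply, sub_eq_zero.mp h2]
      · -- off-diagonal: use entry C((j,i),(i... want H i j = 0.  key: C((a,k),(b,l)) = -I((l=b)*H k a - (k=a)*H b l). Want H i j: take k=i, a=j, l=b arbitrary with k≠a i.e. i≠j. Take b=l=i: C((j,i),(i,i)) = -I*(H i j - (if i=j then H i i else 0)) = -I * H i j.
        have := hzero (j, i) (i, i)
        rw [key] at this
        simp only [if_pos rfl, if_neg (Ne.symm hij)] at this
        have : H i j = 0 := by
          rcases mul_eq_zero.mp this with h | h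
          · exact absurd h (by simp [Complex.I_ne_zero])
          · simpa using h
        simp [Matrix.one_apply, hij, this]
  · rintro ⟨c, rfl⟩
    have hz : choi E = 0 := by
      ext ⟨i, k⟩ ⟨j, l⟩
      rw [key]
      by_cases h1 : j = l <;> by_cases h2 : i = k <;>
        simp [h1, h2, Matrix.one_apply, Matrix.smul_apply, eq_comm]
    rw [hz]
    exact Matrix.PosSemidef.zero
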